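/- Let 𝔉=(X,R) be a rooted frame such that X = R_♯^{k-1}[x] for every x∈X (where k ≥ 1), and let 𝔊=(Y,S) be a rooted image-finite frame with y∈Y. Then there exists a surjective t-morphism from 𝔉 onto 𝔊 if and only if ¬𝒥^k(𝔊,y) is not valid in 𝔉. -/

import Mathlib

/-! ## Syntax of tense logic -/

inductive TForm : Type
  | var : ℕ → TForm
  | bot : TForm
  | imp : TForm → TForm → TForm
  | box : TForm → TForm
  | bdia : TForm → TForm
  deriving DecidableEq

namespace TForm

def neg (φ : TForm) : TForm := imp φ bot

def top : TForm := neg bot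

def orf (φ ψ : TForm) : TForm := imp (neg φ) ψ

def andf (φ ψ : TForm) : TForm := neg (imp φ (neg ψ))

def dia (φ : TForm) : TForm := neg (box (neg φ))

def bbox (φ : TForm) : TForm := neg (bdia (neg φ))

def subst (s : ℕ → TForm) : TForm → TForm
  | var n => s n
  | bot => bot
  | imp φ ψ => imp (subst s φ) (subst s ψ)
  | box φ => box (subst s φ)
  | bdia φ => bdia (subst s φ)

/-- Modal degree of a formula. -/
def mdeg : TForm → ℕ
  | var _ => 0
  | bot => 0
  | imp φ ψ => max (mdeg φ) (mdeg ψ)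
  | box φ => mdeg φ + 1
  | bdia φ => mdeg φ + 1

end TForm

open TForm

/-! ## Frames and relational notions -/

/-- `R[U] = {z : ∃ y ∈ U, R y z}`. -/
def Rimg {X : Type*} (R : X → X → Prop) (U : Set X) : Set X := {z | ∃ y ∈ U, R y z}

/-- `R[x]`, the set of `R`-successors of `x`. -/
def rsucc {X : Type*} (R : X → X → Prop) (x : X) : Set X := {y | R x y}

/-- `R̆[x]`, the set of `R`-predecessors of `x`. -/
def rpred {X : Type*} (R : X → X → Prop) (x : X) : Set X := {y | R y x}

/-- `R_♯^k[x]`. -/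
def rsharp {X : Type*} (R : X → X → Prop) : ℕ → X → Set X
  | 0, x => {x}
  | k+1, x => rsharp R k x ∪ Rimg R (rsharp R k x) ∪ Rimg (flip R) (rsharp R k x)

/-- `R_♯^ω[x]`. -/
def rsharpOmega {X : Type*} (R : X → X → Prop) (x : X) : Set X := ⋃ k : ℕ, rsharp R k x

/-- A frame is rooted if it is generated by a single point under `R` and its converse. -/
def Rooted {X : Type*} (R : X → X → Prop) : Prop := ∃ x : X, ∀ y : X, y ∈ rsharpOmega R x

/-- A frame is image-finite if `R_♯^1[x]` is finite for every `x`. -/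
def ImageFinite {X : Type*} (R : X → X → Prop) : Prop := ∀ x : X, (rsharp R 1 x).Finite

/-! ## Semantics -/

def TSat {X : Type*} (R : X → X → Prop) (V : ℕ → Set X) : TForm → Set X
  | .var n => V n
  | .bot => ∅
  | .imp φ ψ => (TSat R V φ)ᶜ ∪ TSat R V ψ
  | .box φ => {x | ∀ y, R x y → y ∈ TSat R V φ}
  | .bdia φ => {x | ∃ y, R y x ∧ y ∈ TSat R V φ}

/-- `φ` is valid at the point `x` of the frame `(X,R)`. -/
def ValidAt {X : Type*} (R : X → X → Prop) (x : X) (φ : TForm) : Prop :=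
  ∀ V : ℕ → Set X, x ∈ TSat R V φ

/-- `φ` is valid in the frame `(X,R)`. -/
def Valid {X : Type*} (R : X → X → Prop) (φ : TForm) : Prop :=
  ∀ (V : ℕ → Set X) (x : X), x ∈ TSat R V φ

/-- The tense logic of a frame. -/
def FrameLog {X : Type*} (R : X → X → Prop) : Set TForm := {φ | Valid R φ}

/-! ## Tense logics -/

/-- `φ` is a substitution instance of a classical propositional tautology. -/
def IsTautInstance (φ : TForm) : Prop :=
  ∀ v : TForm → Prop, ¬ v .bot → (∀ ψ χ, v (.imp ψ χ) ↔ (v ψ → v χ)) → v φ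

/-- A (normal) tense logic. -/
structure TenseLogic (L : Set TForm) : Prop where
  taut_mem : ∀ φ, IsTautInstance φ → φ ∈ L
  adjoint : ∀ φ ψ : TForm, TForm.imp (.bdia φ) ψ ∈ L ↔ TForm.imp φ (.box ψ) ∈ L
  mp : ∀ φ ψ : TForm, TForm.imp φ ψ ∈ L → φ ∈ L → ψ ∈ L
  subst_mem : ∀ φ ∈ L, ∀ s : ℕ → TForm, TForm.subst s φ ∈ L

def Consistent (L : Set TForm) : Prop := TForm.bot ∉ L

/-- A logic is tabular if it is the logic of some finite (nonempty) frame. -/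
def Tabular (L : Set TForm) : Prop :=
  ∃ (X : Type) (_ : Finite X) (_ : Nonempty X) (R : X → X → Prop), L = FrameLog R

/-- A logic is pretabular if it is not tabular while every proper consistent
tense-logic extension of it is tabular. -/
def Pretabular (L : Set TForm) : Prop :=
  ¬ Tabular L ∧
    ∀ L' : Set TForm, TenseLogic L' → L ⊆ L' → L ≠ L' → Consistent L' → Tabular L'

/-- The set of pretabular tense logics extending `L0`. -/
def PTAB (L0 : Set TForm) : Set (Set TForm) :=
  {L | TenseLogic L ∧ L0 ⊆ L ∧ Pretabular L}

/-! ## Some formulas -/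

def bigConj : List TForm → TForm
  | [] => TForm.top
  | φ :: l => andf φ (bigConj l)

def bigDisj : List TForm → TForm
  | [] => TForm.bot
  | φ :: l => orf φ (bigDisj l)

/-- `Δ^k φ`. -/
def tdelta : ℕ → TForm → TForm
  | 0, φ => φ
  | k+1, φ => orf (tdelta k φ) (orf (dia (tdelta k φ)) (TForm.bdia (tdelta k φ)))

/-- `∇^k φ = ¬Δ^k¬φ`. -/
def tnabla (k : ℕ) (φ : TForm) : TForm := neg (tdelta k (neg φ))

/-- `ψ_i = ¬p_0 ∧ ⋯ ∧ ¬p_{i-1} ∧ p_i`. -/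
def tpsi (i : ℕ) : TForm :=
  bigConj (((List.range i).map fun j => neg (var j)) ++ [var i])

/-- `tab^T_n = ¬(Δ^n ψ_0 ∧ ⋯ ∧ Δ^n ψ_n)`. -/
def tabT (n : ℕ) : TForm :=
  neg (bigConj ((List.range (n+1)).map fun i => tdelta n (tpsi i)))

/-! ## General frames -/

structure IsGeneralFrame {X : Type*} (R : X → X → Prop) (A : Set (Set X)) : Prop where
  empty_mem : ∅ ∈ A
  inter_mem : ∀ U ∈ A, ∀ V ∈ A, U ∩ V ∈ A
  compl_mem : ∀ U ∈ A, Uᶜ ∈ A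
  fimg_mem : ∀ U ∈ A, Rimg R U ∈ A
  bimg_mem : ∀ U ∈ A, Rimg (flip R) U ∈ A

def Differentiated {X : Type*} (A : Set (Set X)) : Prop :=
  ∀ x y : X, x ≠ y → ∃ U ∈ A, x ∈ U ∧ y ∉ U

def Tight {X : Type*} (R : X → X → Prop) (A : Set (Set X)) : Prop :=
  ∀ x y : X, ¬ R x y →
    ∃ U ∈ A, ∃ V ∈ A, (x ∈ U ∧ x ∉ Rimg (flip R) V) ∧ (y ∈ V ∧ y ∉ Rimg R U)

/-- Validity in a general frame: truth at all points under all valuations into `A`. -/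
def GValid {X : Type*} (R : X → X → Prop) (A : Set (Set X)) (φ : TForm) : Prop :=
  ∀ V : ℕ → Set X, (∀ n, V n ∈ A) → ∀ x, x ∈ TSat R V φ

/-- Validity at a point of a general frame. -/
def GValidAt {X : Type*} (R : X → X → Prop) (A : Set (Set X)) (x : X) (φ : TForm) : Prop :=
  ∀ V : ℕ → Set X, (∀ n, V n ∈ A) → x ∈ TSat R V φ

/-! ## (Local) t-morphisms -/

/-- Domain of a partial function. -/
def pdom {X Y : Type*} (f : X → Option Y) : Set X := {x | (f x).isSome}

/-- Image of a set under a partial function. -/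
def pimg {X Y : Type*} (f : X → Option Y) (S : Set X) : Set Y := {y | ∃ x ∈ S, f x = some y}

/-- Range of a partial function. -/
def pran {X Y : Type*} (f : X → Option Y) : Set Y := {y | ∃ x, f x = some y}

/-- `f` is a `k`-t-morphism from `((X,R),x)` to `((Y,S),y)`. -/
def IsKTMorphism {X Y : Type*} (R : X → X → Prop) (S : Y → Y → Prop)
    (f : X → Option Y) (x : X) (y : Y) (k : ℕ) : Prop :=
  rsharp R k x ⊆ pdom f ∧ f x = some y ∧
    ∀ z ∈ rsharp R (k-1) x, ∀ z' : Y, f z = some z' →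
      pimg f (rsucc R z) = rsucc S z' ∧ pimg f (rpred R z) = rpred S z'

/-- A (total) t-morphism between frames. -/
def IsTMorphism {X Y : Type*} (R : X → X → Prop) (S : Y → Y → Prop) (f : X → Y) : Prop :=
  ∀ x : X, f '' rsucc R x = rsucc S (f x) ∧ f '' rpred R x = rpred S (f x)

/-! ## Generalized Jankov formulas -/

def finPairs (n : ℕ) : List (Fin n × Fin n) :=
  (List.finRange n).flatMap fun i => (List.finRange n).map fun j => (i, j)

open Classical in
/-- The generalized Jankov formula `𝒥^k(𝔊,y)`, relative to an enumeration
`e : Fin n → Y` of `S_♯^k[y]` with `e 0 = y`. -/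
noncomputable def jankov {Y : Type*} (S : Y → Y → Prop) (k n : ℕ) (e : Fin n → Y) : TForm :=
  andf (andf (TForm.var 0) (tnabla k (bigDisj ((List.finRange n).map fun i => TForm.var i.val))))
    (andf
      (bigConj (((finPairs n).filter fun p => decide (p.1 ≠ p.2)).map fun p =>
        tnabla k (TForm.imp (.var p.1.val) (neg (.var p.2.val)))))
      (andf
        (bigConj (((finPairs n).filter fun p => decide (S (e p.1) (e p.2))).map fun p =>
          tnabla (k-1) (andf (TForm.imp (.var p.1.val) (dia (.var p.2.val)))
            (TForm.imp (.var p.2.val) (.bdia (.var p.1.val))))))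
        (bigConj (((finPairs n).filter fun p => decide (¬ S (e p.1) (e p.2))).map fun p =>
          tnabla (k-1) (andf (TForm.imp (.var p.1.val) (neg (dia (.var p.2.val))))
            (TForm.imp (.var p.2.val) (neg (.bdia (.var p.1.val)))))))))

/-! ## Bounded-parameter formulas -/

/-- `bz_n = Δ^{n+1}p → Δ^n p`. -/
def bz (n : ℕ) : TForm := TForm.imp (tdelta (n+1) (var 0)) (tdelta n (var 0))

def offDiag (n : ℕ) : List (Fin n × Fin n) :=
  (finPairs n).filter fun p => decide (p.1 ≠ p.2)

/-- `bw^+_n`. -/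
def bwp (n : ℕ) : TForm :=
  TForm.imp (bigConj ((List.finRange (n+1)).map fun i => dia (var i.val)))
    (bigDisj ((offDiag (n+1)).map fun p =>
      dia (andf (var p.1.val) (orf (var p.2.val) (dia (var p.2.val))))))

/-- `bw^-_n`. -/
def bwm (n : ℕ) : TForm :=
  TForm.imp (bigConj ((List.finRange (n+1)).map fun i => TForm.bdia (var i.val)))
    (bigDisj ((offDiag (n+1)).map fun p =>
      TForm.bdia (andf (var p.1.val) (orf (var p.2.val) (TForm.bdia (var p.2.val))))))

/-- `bd_n` (with `bd_0 := ⊤`, unused). -/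
def bd : ℕ → TForm
  | 0 => TForm.top
  | 1 => TForm.imp (dia (box (var 0))) (var 0)
  | k+2 => TForm.imp (dia (andf (box (var (k+1))) (neg (bd (k+1))))) (var (k+1))

/-- Every strict chain inside `R[x]` has length at most `n` (`dep(x) ≤ n`). -/
def depLe {X : Type*} (R : X → X → Prop) (x : X) (n : ℕ) : Prop :=
  ∀ (m : ℕ) (c : Fin m → X), (∀ i, R x (c i)) →
    (∀ i j : Fin m, i < j → R (c i) (c j) ∧ ¬ R (c j) (c i)) → m ≤ n

/-- Every antichain inside `R[x]` has size at most `n` (`wid^+(x) ≤ n`). -/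
def widPlusLe {X : Type*} (R : X → X → Prop) (x : X) (n : ℕ) : Prop :=
  ∀ (m : ℕ) (c : Fin m → X), Function.Injective c → (∀ i, R x (c i)) →
    (∀ i j : Fin m, i ≠ j → ¬ R (c i) (c j)) → m ≤ n

/-- `wid^-(x) ≤ n`. -/
def widMinusLe {X : Type*} (R : X → X → Prop) (x : X) (n : ℕ) : Prop :=
  widPlusLe (flip R) x n

/-- `zdg(x) ≤ n`. -/
def zdgLe {X : Type*} (R : X → X → Prop) (x : X) (n : ℕ) : Prop :=
  rsharp R n x = rsharpOmega R x

/-! ## Axiomatically presented logics -/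

/-- The least tense logic containing `Γ` (i.e. `K_t ⊕ Γ`). -/
def TLogicGen (Γ : Set TForm) : Set TForm := ⋂₀ {L : Set TForm | TenseLogic L ∧ Γ ⊆ L}

def axT : TForm := TForm.imp (box (var 0)) (var 0)

def ax4 : TForm := TForm.imp (box (var 0)) (box (box (var 0)))

/-- `S4_t`. -/
def S4t : Set TForm := TLogicGen {axT, ax4}

/-- `S4BP^{k,l}_{n,m}` with all parameters finite. -/
def S4BPfin (k l n m : ℕ) : Set TForm := TLogicGen {axT, ax4, bd k, bz l, bwp n, bwm m}

/-- `S4BP^{k,ω}_{n,m}` (no bound on z-degree: `bz_ω = ⊤`). -/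
def S4BPko (k n m : ℕ) : Set TForm := TLogicGen {axT, ax4, bd k, bwp n, bwm m}

/-- `S4.3_t = S4BP^{ω,1}_{1,1}`. -/
def S43t : Set TForm := TLogicGen {axT, ax4, bz 1, bwp 1, bwm 1}

/-- `S4BP^{2,ω}_{2,2}`. -/
def S4BP2w22 : Set TForm := TLogicGen {axT, ax4, bd 2, bwp 2, bwm 2}

/-- `S4BP^{2,ω}_{2,3}`. -/
def S4BP2w23 : Set TForm := TLogicGen {axT, ax4, bd 2, bwp 2, bwm 3}

/-- `S5_t = S4_t ⊕ (◇p → □◇p)`. -/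
def S5t : Set TForm := TLogicGen {axT, ax4, TForm.imp (dia (var 0)) (box (dia (var 0)))}

/-- Kripke completeness: `L` is the logic of the class of Kripke frames validating `L`. -/
def KripkeComplete (L : Set TForm) : Prop :=
  L = {φ | ∀ (X : Type) (R : X → X → Prop), Nonempty X → (∀ ψ ∈ L, Valid R ψ) → Valid R φ}

/-- The finite model property: `L` is the logic of the class of finite frames validating `L`. -/
def HasFMP (L : Set TForm) : Prop :=
  L = {φ | ∀ (X : Type) (R : X → X → Prop), Finite X → Nonempty X →
        (∀ ψ ∈ L, Valid R ψ) → Valid R φ}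

/-! ## Skeletons and pre-skeletons -/

/-- A skeleton: a preorder frame all of whose clusters are singletons. -/
def IsSkeleton {X : Type*} (R : X → X → Prop) : Prop :=
  Reflexive R ∧ Transitive R ∧ ∀ y z : X, R y z → R z y → y = z

/-- Membership in the blown-up cluster `C^x_λ = {x} ∪ N`. -/
def inCl {X N : Type*} (x : X) : X ⊕ N → Prop
  | .inl u => u = x
  | .inr _ => True

/-- The relation of the pre-skeleton `𝔉^x_λ`, where the fresh points are indexed by `N`:
`R ∪ (C^x_λ × R[x]) ∪ (R̆[x] × C^x_λ) ∪ (C^x_λ × C^x_λ)`. -/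
def preRel {X : Type*} (N : Type*) (R : X → X → Prop) (x : X) : X ⊕ N → X ⊕ N → Prop :=
  fun a b =>
    (∃ u v, a = Sum.inl u ∧ b = Sum.inl v ∧ R u v) ∨
    (inCl x a ∧ ∃ v, b = Sum.inl v ∧ R x v) ∨
    (inCl x b ∧ ∃ u, a = Sum.inl u ∧ R u x) ∨
    (inCl x a ∧ inCl x b)

/-- c-irreducibility of the pre-skeleton `𝔉^x_1`: every t-morphic image of `𝔉^x_1` is
isomorphic to `𝔉^x_1` or is a t-morphic image of `𝔉`. -/
def CIrrOne {X : Type} (R : X → X → Prop) (x : X) : Prop :=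
  ∀ (Y : Type) (S : Y → Y → Prop),
    (∃ f : X ⊕ Fin 1 → Y, Function.Surjective f ∧ IsTMorphism (preRel (Fin 1) R x) S f) →
    ((∃ g : X ⊕ Fin 1 → Y, Function.Bijective g ∧ IsTMorphism (preRel (Fin 1) R x) S g) ∨
     (∃ h : X → Y, Function.Surjective h ∧ IsTMorphism R S h))

/-- c-irreducibility of the pre-skeleton `𝔉^x_ω`: every t-morphic image of `𝔉^x_ω` is
isomorphic to `𝔉^x_m` for some `0 < m ≤ ω` or is a t-morphic image of `𝔉`. -/
def CIrrOmega {X : Type} (R : X → X → Prop) (x : X) : Prop :=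
  ∀ (Y : Type) (S : Y → Y → Prop),
    (∃ f : X ⊕ ℕ → Y, Function.Surjective f ∧ IsTMorphism (preRel ℕ R x) S f) →
    ((∃ m : ℕ, 0 < m ∧ ∃ g : X ⊕ Fin m → Y, Function.Bijective g ∧
        IsTMorphism (preRel (Fin m) R x) S g) ∨
     (∃ g : X ⊕ ℕ → Y, Function.Bijective g ∧ IsTMorphism (preRel ℕ R x) S g) ∨
     (∃ h : X → Y, Function.Surjective h ∧ IsTMorphism R S h))

/-! ## Chains, garlands -/

/-- The chain `𝔠_n = ({0,…,n-1}, ≥)`. -/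
def chainR (n : ℕ) : Fin n → Fin n → Prop := fun i j => j ≤ i

/-- `L^↑ = ⋂_{n ≥ 1} Log(𝔠_n)`, the tense logic of all finite chains. -/
def Lup : Set TForm := ⋂ n : ℕ, FrameLog (chainR (n+1))

def Lcirc : Set TForm := FrameLog (preRel ℕ (chainR 1) (0 : Fin 1))

def Lplus : Set TForm := FrameLog (preRel ℕ (chainR 2) (1 : Fin 2))

def Lminus : Set TForm := FrameLog (preRel ℕ (chainR 2) (0 : Fin 2))

def Lpm : Set TForm := FrameLog (preRel ℕ (chainR 3) (1 : Fin 3))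

/-- The frame `𝔊_ℤ`. -/
def Rz : ℤ → ℤ → Prop := fun i j => i = j ∨ (Odd i ∧ (j = i - 1 ∨ j = i + 1))

/-- `Ga = Log(𝔊_ℤ)`. -/
def Ga : Set TForm := FrameLog Rz

/-- The garland `𝔊_n` on `{0,…,n}`. -/
def garR (n : ℕ) : Fin (n+1) → Fin (n+1) → Prop :=
  fun i j => i = j ∨ (Odd (i : ℕ) ∧ ((j : ℕ) + 1 = (i : ℕ) ∨ (j : ℕ) = (i : ℕ) + 1))

/-! ## Generalized Thue–Morse sequences -/

/-- Endpoints `(lo, hi)` of the domain of the stage-`k` approximation `χ^f_k`. -/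
def tmBnd : ℕ → ℤ × ℤ
  | 0 => (0, 2)
  | k+1 =>
      let ab := tmBnd k
      if k % 2 = 0 then (ab.1, ab.2 + (ab.2 - ab.1 + 1) + 1)
      else (ab.1 - (ab.2 - ab.1 + 1) - 1, ab.2)

/-- Value of the stage-`k` approximation `χ^f_k` (junk outside its domain). -/
def tmVal (f : ℕ → Bool) : ℕ → ℤ → Bool
  | 0, j => decide (j = 2)
  | k+1, j =>
      let a := (tmBnd k).1
      let b := (tmBnd k).2
      if k % 2 = 0 then
        if j ≤ b then tmVal f k j
        else if j = b + 1 then f k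
        else ! tmVal f k (j - (b + 2) + a)
      else
        if a ≤ j then tmVal f k j
        else if j = a - 1 then f k
        else ! tmVal f k (j + (b - a + 1) + 1)

/-- The generalized Thue–Morse sequence `χ^f : ℤ → Bool` generated by `f`
(evaluated at a stage whose domain certainly contains the argument). -/
def chi (f : ℕ → Bool) : ℤ → Bool := fun j => tmVal f (2 * j.natAbs + 2) j

/-- `α` is finitely perfect: for every finite subsequence `β = α↾[c,d]` there is `n ∈ ω`
such that `β` embeds into every finite subsequence `ζ = α↾[c',d']` with `|dom ζ| > n`. -/
def FinitelyPerfect (α : ℤ → Bool) : Prop :=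
  ∀ c d : ℤ, ∃ n : ℕ, ∀ c' d' : ℤ, (n : ℤ) < d' - c' + 1 →
    ∃ s : ℤ, c' ≤ c + s ∧ d + s ≤ d' ∧ ∀ j : ℤ, c ≤ j → j ≤ d → α j = α (j + s)

section Statement5Aux

variable {X Y : Type*} {R : X → X → Prop} {S : Y → Y → Prop}

/-- Symmetric ball matching the semantics of `tdelta`. -/
def dball (R : X → X → Prop) : ℕ → X → Set X
  | 0, x => {x}
  | m+1, x => dball R m x ∪ {z | ∃ y, (R x y ∨ R y x) ∧ z ∈ dball R m y}

lemma dball_succ_self {m : ℕ} {x : X} : dball R m x ⊆ dball R (m+1) x :=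
  Set.subset_union_left

lemma dball_mono {m m' : ℕ} (h : m ≤ m') {x : X} : dball R m x ⊆ dball R m' x := by
  induction h with
  | refl => exact subset_rfl
  | step _ ih => exact ih.trans dball_succ_self

lemma dball_append : ∀ {m : ℕ} {x w z : X}, w ∈ dball R m x → (R w z ∨ R z w) →
    z ∈ dball R (m+1) x
  | 0, x, w, z, hw, hz => by
    have hw' : w = x := hw
    subst hw'
    exact Or.inr ⟨z, hz, rfl⟩
  | m+1, x, w, z, hw, hz => by
    rcases hw with hw | ⟨y, hy, hw⟩
    · exact dball_succ_self (dball_append hw hz)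
    · exact Or.inr ⟨y, hy, dball_append hw hz⟩

lemma rsharp_succ_self {m : ℕ} {x : X} : rsharp R m x ⊆ rsharp R (m+1) x :=
  fun _ h => Or.inl (Or.inl h)

lemma rsharp_mono {m m' : ℕ} (h : m ≤ m') {x : X} : rsharp R m x ⊆ rsharp R m' x := by
  induction h with
  | refl => exact subset_rfl
  | step _ ih => exact ih.trans rsharp_succ_self

lemma rsharp_subset_dball : ∀ (m : ℕ) (x : X), rsharp R m x ⊆ dball R m x
  | 0, x => subset_rfl
  | m+1, x => by
    rintro z ((h | ⟨w, hw, hwz⟩) | ⟨w, hw, hwz⟩)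
    · exact Or.inl (rsharp_subset_dball m x h)
    · exact dball_append (rsharp_subset_dball m x hw) (Or.inl hwz)
    · exact dball_append (rsharp_subset_dball m x hw) (Or.inr hwz)

lemma rsharp_step {x y : X} (h : R x y ∨ R y x) : ∀ m, rsharp R m y ⊆ rsharp R (m+1) x
  | 0 => by
    rintro z hz
    have hz' : z = y := hz
    subst hz'
    rcases h with h | h
    · exact Or.inl (Or.inr ⟨x, rfl, h⟩)
    · exact Or.inr ⟨x, rfl, h⟩
  | m+1 => by
    rintro z ((hz | ⟨w, hw, hwz⟩) | ⟨w, hw, hwz⟩)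
    · exact rsharp_succ_self (rsharp_step h m hz)
    · exact Or.inl (Or.inr ⟨w, rsharp_step h m hw, hwz⟩)
    · exact Or.inr ⟨w, rsharp_step h m hw, hwz⟩

lemma rsharp_symm : ∀ (m : ℕ) {x z : X}, z ∈ rsharp R m x → x ∈ rsharp R m z
  | 0, x, z, h => by
    have h' : z = x := h
    subst h'
    rfl
  | m+1, x, z, h => by
    rcases h with (h | ⟨w, hw, hwz⟩) | ⟨w, hw, hwz⟩
    · exact rsharp_succ_self (rsharp_symm m h)
    · exact rsharp_step (Or.inr hwz) m (rsharp_symm m hw)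
    · exact rsharp_step (show R z w ∨ R w z from Or.inl hwz) m (rsharp_symm m hw)

lemma rsharp_trans : ∀ (b : ℕ) {a : ℕ} {y w z : X}, w ∈ rsharp R b y →
    z ∈ rsharp R a w → z ∈ rsharp R (a+b) y
  | 0, a, y, w, z, hw, hz => by
    have hw' : w = y := hw
    subst hw'
    exact hz
  | b+1, a, y, w, z, hw, hz => by
    rcases hw with (hw | ⟨v, hv, hvw⟩) | ⟨v, hv, hvw⟩
    · have := rsharp_succ_self (rsharp_trans b hw hz)
      have he : a + b + 1 = a + (b+1) := by omega
      rwa [he] at this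
    · have hz' : z ∈ rsharp R (a+1) v := rsharp_step (Or.inl hvw) a hz
      have := rsharp_trans b hv hz'
      have he : a + 1 + b = a + (b+1) := by omega
      rwa [he] at this
    · have hz' : z ∈ rsharp R (a+1) v :=
        rsharp_step (show R v w ∨ R w v from Or.inr hvw) a hz
      have := rsharp_trans b hv hz'
      have he : a + 1 + b = a + (b+1) := by omega
      rwa [he] at this

lemma rsharp_succ_eq (m : ℕ) (x : X) :
    rsharp R (m+1) x =
      rsharp R m x ∪ Rimg R (rsharp R m x) ∪ Rimg (flip R) (rsharp R m x) := rfl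

lemma rsharp_fix {m : ℕ} {y : X} (h : rsharp R (m+1) y = rsharp R m y) :
    ∀ j, rsharp R (m+j) y = rsharp R m y
  | 0 => rfl
  | j+1 => by
    have ih := rsharp_fix h j
    show rsharp R ((m+j)+1) y = rsharp R m y
    have : rsharp R (m+j+1) y =
        rsharp R (m+j) y ∪ Rimg R (rsharp R (m+j) y) ∪ Rimg (flip R) (rsharp R (m+j) y) :=
      rsharp_succ_eq _ _
    rw [this, ih, ← rsharp_succ_eq, h]

lemma rsharp_all (hroot : Rooted R) {m : ℕ} {y : X}
    (h : rsharp R (m+1) y = rsharp R m y) : ∀ z, z ∈ rsharp R m y := by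
  obtain ⟨x₀, hx₀⟩ := hroot
  intro z
  obtain ⟨a, hz⟩ : ∃ a, z ∈ rsharp R a x₀ := Set.mem_iUnion.mp (hx₀ z)
  obtain ⟨b, hy⟩ : ∃ b, y ∈ rsharp R b x₀ := Set.mem_iUnion.mp (hx₀ y)
  have hx₀y : x₀ ∈ rsharp R b y := rsharp_symm b hy
  have hz' : z ∈ rsharp R (a+b) y := rsharp_trans b hx₀y hz
  have hz'' : z ∈ rsharp R (m+(a+b)) y := rsharp_mono (Nat.le_add_left _ _) hz'
  rwa [rsharp_fix h (a+b)] at hz''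

lemma rsharp_map {f : X → Y} (hf : ∀ u v, R u v → S (f u) (f v)) :
    ∀ (m : ℕ) {x z : X}, z ∈ rsharp R m x → f z ∈ rsharp S m (f x)
  | 0, x, z, h => by
    have h' : z = x := h
    subst h'
    rfl
  | m+1, x, z, h => by
    rcases h with (h | ⟨w, hw, hwz⟩) | ⟨w, hw, hwz⟩
    · exact rsharp_succ_self (rsharp_map hf m h)
    · exact Or.inl (Or.inr ⟨f w, rsharp_map hf m hw, hf _ _ hwz⟩)
    · exact Or.inr ⟨f w, rsharp_map hf m hw, hf _ _ hwz⟩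

/-! Semantics helper lemmas -/

variable {V : ℕ → Set X} {x : X}

lemma tsat_var {i : ℕ} : x ∈ TSat R V (.var i) ↔ x ∈ V i := Iff.rfl

lemma tsat_imp {φ ψ : TForm} :
    x ∈ TSat R V (.imp φ ψ) ↔ (x ∈ TSat R V φ → x ∈ TSat R V ψ) := by
  simp [TSat, imp_iff_not_or]

lemma tsat_neg {φ : TForm} : x ∈ TSat R V (neg φ) ↔ x ∉ TSat R V φ := by
  simp [TForm.neg, TSat]

lemma tsat_andf {φ ψ : TForm} :
    x ∈ TSat R V (andf φ ψ) ↔ (x ∈ TSat R V φ ∧ x ∈ TSat R V ψ) := by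
  simp [TForm.andf, TForm.neg, TSat]

lemma tsat_orf {φ ψ : TForm} :
    x ∈ TSat R V (orf φ ψ) ↔ (x ∈ TSat R V φ ∨ x ∈ TSat R V ψ) := by
  simp [TForm.orf, TForm.neg, TSat]

lemma tsat_dia {φ : TForm} :
    x ∈ TSat R V (dia φ) ↔ ∃ z, R x z ∧ z ∈ TSat R V φ := by
  simp [TForm.dia, TForm.neg, TSat]

lemma tsat_bdia {φ : TForm} :
    x ∈ TSat R V (.bdia φ) ↔ ∃ z, R z x ∧ z ∈ TSat R V φ := Iff.rfl

lemma tsat_top : x ∈ TSat R V TForm.top := by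
  simp [TForm.top, TForm.neg, TSat]

lemma tsat_bigConj {l : List TForm} :
    x ∈ TSat R V (bigConj l) ↔ ∀ φ ∈ l, x ∈ TSat R V φ := by
  induction l with
  | nil => simpa [bigConj] using tsat_top
  | cons φ l ih => simp [bigConj, tsat_andf, ih]

lemma tsat_bigDisj {l : List TForm} :
    x ∈ TSat R V (bigDisj l) ↔ ∃ φ ∈ l, x ∈ TSat R V φ := by
  induction l with
  | nil => simp [bigDisj, TSat]
  | cons φ l ih => simp [bigDisj, tsat_orf, ih]

lemma tsat_tdelta {φ : TForm} : ∀ {m : ℕ} {x : X},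
    x ∈ TSat R V (tdelta m φ) ↔ ∃ z ∈ dball R m x, z ∈ TSat R V φ
  | 0, x => by simp [tdelta, dball]
  | m+1, x => by
    rw [tdelta, tsat_orf, tsat_orf, tsat_dia, tsat_bdia]
    constructor
    · rintro (h | ⟨y, hxy, h⟩ | ⟨y, hyx, h⟩)
      · obtain ⟨z, hz, hφ⟩ := tsat_tdelta.mp h
        exact ⟨z, Or.inl hz, hφ⟩
      · obtain ⟨z, hz, hφ⟩ := tsat_tdelta.mp h
        exact ⟨z, Or.inr ⟨y, Or.inl hxy, hz⟩, hφ⟩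
      · obtain ⟨z, hz, hφ⟩ := tsat_tdelta.mp h
        exact ⟨z, Or.inr ⟨y, Or.inr hyx, hz⟩, hφ⟩
    · rintro ⟨z, hz | ⟨y, h | h, hz⟩, hφ⟩
      · exact Or.inl (tsat_tdelta.mpr ⟨z, hz, hφ⟩)
      · exact Or.inr (Or.inl ⟨y, h, tsat_tdelta.mpr ⟨z, hz, hφ⟩⟩)
      · exact Or.inr (Or.inr ⟨y, h, tsat_tdelta.mpr ⟨z, hz, hφ⟩⟩)

lemma tsat_tnabla {m : ℕ} {φ : TForm} :
    x ∈ TSat R V (tnabla m φ) ↔ ∀ z ∈ dball R m x, z ∈ TSat R V φ := by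
  rw [tnabla, tsat_neg, tsat_tdelta]
  push_neg
  simp [tsat_neg]

lemma mem_finPairs {n : ℕ} (p : Fin n × Fin n) : p ∈ finPairs n := by
  rw [finPairs, List.mem_flatMap]
  exact ⟨p.1, List.mem_finRange _, List.mem_map.mpr ⟨p.2, List.mem_finRange _, rfl⟩⟩

lemma tsat_bigConj_filter_map {α : Type*} {l : List α} {pr : α → Bool} {F : α → TForm} :
    x ∈ TSat R V (bigConj ((l.filter pr).map F)) ↔
      ∀ a ∈ l, pr a = true → x ∈ TSat R V (F a) := by
  rw [tsat_bigConj]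
  constructor
  · intro h a ha hpa
    exact h _ (List.mem_map_of_mem (f := F) (List.mem_filter.mpr ⟨ha, hpa⟩))
  · intro h φ hφ
    obtain ⟨a, ha, rfl⟩ := List.mem_map.mp hφ
    obtain ⟨ha', hpa⟩ := List.mem_filter.mp ha
    exact h a ha' hpa

lemma tsat_jankov {k n : ℕ} {e : Fin n → Y} :
    x ∈ TSat R V (jankov S k n e) ↔
      x ∈ V 0 ∧
      (∀ z ∈ dball R k x, ∃ i : Fin n, z ∈ V i.val) ∧
      (∀ p : Fin n × Fin n, p.1 ≠ p.2 → ∀ z ∈ dball R k x,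
        z ∈ V p.1.val → z ∉ V p.2.val) ∧
      (∀ p : Fin n × Fin n, S (e p.1) (e p.2) → ∀ z ∈ dball R (k-1) x,
        (z ∈ V p.1.val → ∃ v, R z v ∧ v ∈ V p.2.val) ∧
        (z ∈ V p.2.val → ∃ v, R v z ∧ v ∈ V p.1.val)) ∧
      (∀ p : Fin n × Fin n, ¬ S (e p.1) (e p.2) → ∀ z ∈ dball R (k-1) x,
        (z ∈ V p.1.val → ¬ ∃ v, R z v ∧ v ∈ V p.2.val) ∧
        (z ∈ V p.2.val → ¬ ∃ v, R v z ∧ v ∈ V p.1.val)) := by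
  rw [jankov, tsat_andf, tsat_andf, tsat_andf, tsat_andf]
  simp only [tsat_bigConj_filter_map, tsat_tnabla, tsat_bigDisj, List.mem_map,
    List.mem_finRange, tsat_imp, tsat_neg, tsat_andf, tsat_dia, tsat_bdia, tsat_var,
    decide_eq_true_iff, true_and, and_true, mem_finPairs, forall_true_left]
  constructor
  · rintro ⟨⟨h0, h1⟩, h2, h3, h4⟩
    refine ⟨h0, ?_, ?_, ?_, ?_⟩
    · intro z hz
      obtain ⟨φ, ⟨i, rfl⟩, hφ⟩ := h1 z hz
      exact ⟨i, hφ⟩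
    · intro p hp z hz h
      exact fun hc => (h2 p hp z hz h) hc
    · intro p hp z hz
      exact h3 p hp z hz
    · intro p hp z hz
      exact h4 p hp z hz
  · rintro ⟨h0, h1, h2, h3, h4⟩
    refine ⟨⟨h0, ?_⟩, ?_, ?_, ?_⟩
    · intro z hz
      obtain ⟨i, hi⟩ := h1 z hz
      exact ⟨.var i.val, ⟨i, rfl⟩, hi⟩
    · intro p hp z hz h
      exact h2 p hp z hz h
    · intro p hp z hz
      exact h3 p hp z hz
    · intro p hp z hz
      exact h4 p hp z hz

end Statement5Aux

/-- for a rooted frame `𝔉` with `X = R_♯^{k-1}[x]` for every `x`, and a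
rooted image-finite frame `𝔊` with point `y`, there is a surjective t-morphism from `𝔉`
onto `𝔊` iff `¬𝒥^k(𝔊,y)` is not valid in `𝔉`. -/
theorem statement5 {X Y : Type} [Nonempty X] [Nonempty Y]
    (R : X → X → Prop) (S : Y → Y → Prop)
    (k : ℕ) (hk : 1 ≤ k)
    (hRroot : Rooted R) (hgen : ∀ x z : X, z ∈ rsharp R (k-1) x)
    (hSroot : Rooted S) (hS : ImageFinite S) (y : Y)
    (n : ℕ) (hn : 0 < n) (e : Fin n → Y) (hinj : Function.Injective e)
    (hrange : Set.range e = rsharp S k y) (he0 : e ⟨0, hn⟩ = y) :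
    (∃ f : X → Y, Function.Surjective f ∧ IsTMorphism R S f) ↔
      ¬ Valid R (TForm.neg (jankov S k n e)) := by
  constructor
  · rintro ⟨f, hfsurj, hft⟩ hvalid
    have hedge : ∀ u v, R u v → S (f u) (f v) := by
      intro u v h
      have h1 := (hft u).1
      have : f v ∈ rsucc S (f u) := h1 ▸ ⟨v, h, rfl⟩
      exact this
    obtain ⟨x₀, hx₀⟩ := hfsurj y
    have hcov : ∀ w : Y, ∃ i : Fin n, e i = w := by
      intro w
      obtain ⟨u, rfl⟩ := hfsurj w
      have h1 : f u ∈ rsharp S (k-1) y := hx₀ ▸ rsharp_map hedge (k-1) (hgen x₀ u)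
      have h2 : f u ∈ rsharp S k y := rsharp_mono (Nat.sub_le k 1) h1
      rw [← hrange] at h2
      exact h2
    set V : ℕ → Set X := fun i => {u | ∃ j : Fin n, (j : ℕ) = i ∧ f u = e j} with hV
    have huniq : ∀ (u : X) (i : Fin n), u ∈ V i.val → f u = e i := by
      rintro u i ⟨j, hj, hfj⟩
      rwa [Fin.val_injective hj] at hfj
    refine (tsat_neg.mp (hvalid V x₀)) (tsat_jankov.mpr ⟨?_, ?_, ?_, ?_, ?_⟩)
    · exact ⟨⟨0, hn⟩, rfl, by rw [hx₀, he0]⟩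
    · intro z _
      obtain ⟨i, hi⟩ := hcov (f z)
      exact ⟨i, i, rfl, hi.symm⟩
    · rintro p hp z _ hz1 hz2
      exact hp (hinj ((huniq z p.1 hz1).symm.trans (huniq z p.2 hz2)))
    · intro p hps z _
      constructor
      · intro hz1
        have h1 := (hft z).1
        have : e p.2 ∈ rsucc S (f z) := by rw [huniq z p.1 hz1]; exact hps
        rw [← h1] at this
        obtain ⟨v, hv, hfv⟩ := this
        exact ⟨v, hv, p.2, rfl, hfv⟩
      · intro hz2
        have h1 := (hft z).2
        have : e p.1 ∈ rpred S (f z) := by rw [huniq z p.2 hz2]; exact hps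
        rw [← h1] at this
        obtain ⟨v, hv, hfv⟩ := this
        exact ⟨v, hv, p.1, rfl, hfv⟩
    · intro p hps z _
      constructor
      · rintro hz1 ⟨v, hv, hvm⟩
        have : f v ∈ rsucc S (f z) := (hft z).1 ▸ ⟨v, hv, rfl⟩
        rw [huniq z p.1 hz1, huniq v p.2 hvm] at this
        exact hps this
      · rintro hz2 ⟨v, hv, hvm⟩
        have : f v ∈ rpred S (f z) := (hft z).2 ▸ ⟨v, hv, rfl⟩
        rw [huniq z p.2 hz2, huniq v p.1 hvm] at this
        exact hps this
  · intro hnv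
    obtain ⟨V, x₀, hx⟩ : ∃ (V : ℕ → Set X) (x₀ : X), x₀ ∈ TSat R V (jankov S k n e) := by
      by_contra h
      push_neg at h
      exact hnv fun V x => tsat_neg.mpr (h V x)
    obtain ⟨hA, hB, hC, hD, hE⟩ := tsat_jankov.mp hx
    have hdbmem : ∀ (m : ℕ), k-1 ≤ m → ∀ (x z : X), z ∈ dball R m x := by
      intro m hm x z
      exact dball_mono hm (rsharp_subset_dball _ x (hgen x z))
    have hB' : ∀ z : X, ∃ i : Fin n, z ∈ V i.val :=
      fun z => hB z (hdbmem k (Nat.sub_le k 1) x₀ z)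
    have hC' : ∀ (i j : Fin n), i ≠ j → ∀ z, z ∈ V i.val → z ∉ V j.val :=
      fun i j hij z => hC (i, j) hij z (hdbmem k (Nat.sub_le k 1) x₀ z)
    have hD' : ∀ (i j : Fin n), S (e i) (e j) → ∀ z : X,
        (z ∈ V i.val → ∃ v, R z v ∧ v ∈ V j.val) ∧
        (z ∈ V j.val → ∃ v, R v z ∧ v ∈ V i.val) :=
      fun i j hij z => hD (i, j) hij z (hdbmem (k-1) le_rfl x₀ z)
    have hE' : ∀ (i j : Fin n), ¬ S (e i) (e j) → ∀ z : X,
        (z ∈ V i.val → ¬ ∃ v, R z v ∧ v ∈ V j.val) ∧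
        (z ∈ V j.val → ¬ ∃ v, R v z ∧ v ∈ V i.val) :=
      fun i j hij z => hE (i, j) hij z (hdbmem (k-1) le_rfl x₀ z)
    choose g hg using hB'
    have huniq : ∀ (z : X) (i : Fin n), z ∈ V i.val → g z = i := by
      intro z i h
      by_contra hne
      exact hC' _ _ hne z (hg z) h
    have hgx : g x₀ = ⟨0, hn⟩ := huniq x₀ ⟨0, hn⟩ hA
    have hedge : ∀ u v, R u v → S (e (g u)) (e (g v)) := by
      intro u v h
      by_contra hns
      exact (hE' (g u) (g v) hns u).1 (hg u) ⟨v, h, hg v⟩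
    have hreach : ∀ m, m ≤ k → ∀ j : Fin n, e j ∈ rsharp S m y → ∃ u, g u = j := by
      intro m
      induction m with
      | zero =>
        intro _ j hj
        have h1 : e j = y := hj
        have h2 : j = ⟨0, hn⟩ := hinj (by rw [h1, he0])
        exact ⟨x₀, h2 ▸ hgx⟩
      | succ m ih =>
        intro hm j hj
        rcases hj with (hj | ⟨w, hw, hww⟩) | ⟨w, hw, hww⟩
        · exact ih (by omega) j hj
        · have hwk : w ∈ rsharp S k y := rsharp_mono (by omega) hw
          rw [← hrange] at hwk
          obtain ⟨j₂, rfl⟩ := hwk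
          obtain ⟨u, hu⟩ := ih (by omega) j₂ hw
          obtain ⟨v, _, hvj⟩ := (hD' j₂ j hww u).1 (hu ▸ hg u)
          exact ⟨v, huniq v j hvj⟩
        · have hwk : w ∈ rsharp S k y := rsharp_mono (by omega) hw
          rw [← hrange] at hwk
          obtain ⟨j₂, rfl⟩ := hwk
          obtain ⟨u, hu⟩ := ih (by omega) j₂ hw
          obtain ⟨v, _, hvj⟩ := (hD' j j₂ hww u).2 (hu ▸ hg u)
          exact ⟨v, huniq v j hvj⟩
    have hsurj : ∀ j : Fin n, ∃ u, g u = j :=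
      fun j => hreach k le_rfl j (hrange ▸ Set.mem_range_self j)
    have hsub : rsharp S k y ⊆ rsharp S (k-1) y := by
      rw [← hrange]
      rintro w ⟨j, rfl⟩
      obtain ⟨u, rfl⟩ := hsurj j
      have h1 := rsharp_map hedge (k-1) (hgen x₀ u)
      rwa [hgx, he0] at h1
    have hfixeq : rsharp S ((k-1)+1) y = rsharp S (k-1) y := by
      have hk1 : (k-1)+1 = k := by omega
      rw [hk1]
      exact Set.Subset.antisymm hsub (rsharp_mono (Nat.sub_le k 1))
    have hall : ∀ w : Y, w ∈ rsharp S (k-1) y := rsharp_all hSroot hfixeq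
    have hcov : ∀ w : Y, ∃ j : Fin n, e j = w := by
      intro w
      have h1 : w ∈ rsharp S k y := rsharp_mono (Nat.sub_le k 1) (hall w)
      rw [← hrange] at h1
      exact h1
    refine ⟨fun u => e (g u), ?_, ?_⟩
    · intro w
      obtain ⟨j, rfl⟩ := hcov w
      obtain ⟨u, rfl⟩ := hsurj j
      exact ⟨u, rfl⟩
    · intro u
      constructor
      · ext w
        constructor
        · rintro ⟨v, hv, rfl⟩
          exact hedge u v hv
        · intro hw
          obtain ⟨j, rfl⟩ := hcov w
          obtain ⟨v, hv, hvj⟩ := (hD' (g u) j hw u).1 (hg u)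
          exact ⟨v, hv, by simp [huniq v j hvj]⟩
      · ext w
        constructor
        · rintro ⟨v, hv, rfl⟩
          exact hedge v u hv
        · intro hw
          obtain ⟨j, rfl⟩ := hcov w
          obtain ⟨v, hv, hvj⟩ := (hD' j (g u) hw u).2 (hg u)
          exact ⟨v, hv, by simp [huniq v j hvj]⟩
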